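/- Let f(z,w) = μ(2z\bar{z} + z²\bar{w} + \bar{z}²w)/(2(1-w\bar{w})) - 2k ln(1-w\bar{w}) be the Kähler potential on the Siegel–Jacobi disk. Then its complex Hessian has entries h_{z\bar{z}} = ∂²f/∂z∂\bar{z} = μ/P, h_{z\bar{w}} = ∂²f/∂z∂\bar{w} = μη/P, h_{w\bar{w}} = ∂²f/∂w∂\bar{w} = μ|η|²/P + 2k/P², where P = 1 - w\bar{w} and η = (z + \bar{z}w)/P. -/

import Mathlib

open Complex

/-- Polarized Kähler potential of the Siegel–Jacobi disk, a holomorphic function of the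
four independent variables `(z, z̄, w, w̄)`; Wirtinger derivatives of the real potential
are the genuine complex partial derivatives of this polarization evaluated at
`z̄ = conj z`, `w̄ = conj w`. -/
noncomputable def sjPotential (k μ : ℝ) (z zb w wb : ℂ) : ℂ :=
  (μ : ℂ) * (2 * z * zb + z ^ 2 * wb + zb ^ 2 * w) / (2 * (1 - w * wb)) -
    2 * (k : ℂ) * Complex.log (1 - w * wb)

lemma sj_dz (k μ : ℝ) (z zb w wb : ℂ) :
    HasDerivAt (fun z' => sjPotential k μ z' zb w wb)
      ((μ : ℂ) * (2 * zb + 2 * z * wb) / (2 * (1 - w * wb))) z := by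
  have hA : HasDerivAt (fun z' : ℂ => 2 * z' * zb) (2 * zb) z := by
    simpa using ((hasDerivAt_id z).const_mul (2 : ℂ)).mul_const zb
  have hB : HasDerivAt (fun z' : ℂ => z' ^ 2 * wb) (2 * z * wb) z := by
    have := (hasDerivAt_pow 2 z).mul_const wb
    refine this.congr_deriv ?_
    push_cast; ring
  have h1 : HasDerivAt (fun z' : ℂ => 2 * z' * zb + z' ^ 2 * wb + zb ^ 2 * w)
      (2 * zb + 2 * z * wb) z := (hA.add hB).add_const (zb ^ 2 * w)
  have h2 := ((h1.const_mul (μ : ℂ)).div_const (2 * (1 - w * wb))).sub_const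
      (2 * (k : ℂ) * Complex.log (1 - w * wb))
  simp only [sjPotential]
  convert h2 using 1

lemma sj_dw (k μ : ℝ) (z zb w wb : ℂ) (hs : 1 - w * wb ∈ slitPlane) :
    HasDerivAt (fun w' => sjPotential k μ z zb w' wb)
      ((μ : ℂ) * (zb + z * wb) ^ 2 / (2 * (1 - w * wb) ^ 2)
        + 2 * (k : ℂ) * wb / (1 - w * wb)) w := by
  have hne : (1 : ℂ) - w * wb ≠ 0 := slitPlane_ne_zero hs
  have hne2 : (2 : ℂ) * (1 - w * wb) ≠ 0 := mul_ne_zero two_ne_zero hne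
  have hf : HasDerivAt (fun w' : ℂ => (μ : ℂ) * (2 * z * zb + z ^ 2 * wb + zb ^ 2 * w'))
      ((μ : ℂ) * zb ^ 2) w := by
    simpa using
      (((hasDerivAt_id w).const_mul (zb ^ 2)).const_add (2 * z * zb + z ^ 2 * wb)).const_mul (μ : ℂ)
  have hg : HasDerivAt (fun w' : ℂ => 2 * (1 - w' * wb)) (2 * (-wb)) w := by
    simpa using (((hasDerivAt_id w).mul_const wb).const_sub 1).const_mul (2 : ℂ)
  have h0 : HasDerivAt (fun w' : ℂ => 1 - w' * wb) (-wb) w := by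
    simpa using ((hasDerivAt_id w).mul_const wb).const_sub 1
  have hlog := (h0.clog hs).const_mul (2 * (k : ℂ))
  have h2 := (hf.div hg hne2).sub hlog
  simp only [sjPotential]
  refine h2.congr_deriv ?_
  field_simp
  ring

/-- The complex Hessian of the Kähler potential
`f = μ(2 z z̄ + z² w̄ + z̄² w)/(2(1-w w̄)) - 2k ln(1-w w̄)` has entries
`h_{z z̄} = μ/P`, `h_{z w̄} = μη/P`, `h_{w w̄} = μ|η|²/P + 2k/P²`,
where `P = 1 - w w̄` and `η = (z + z̄ w)/P`. -/
theorem siegelJacobi_hessian (k μ : ℝ) (hk : 0 < k) (hμ : 0 < μ)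
    (z w : ℂ) (hw : ‖w‖ < 1) :
    let P : ℂ := 1 - w * starRingEnd ℂ w
    let η : ℂ := (z + starRingEnd ℂ z * w) / P
    let ηb : ℂ := (starRingEnd ℂ z + z * starRingEnd ℂ w) / P
    (deriv (fun zb => deriv (fun z' => sjPotential k μ z' zb w (starRingEnd ℂ w)) z)
        (starRingEnd ℂ z) = (μ : ℂ) / P) ∧
    (deriv (fun wb => deriv (fun z' => sjPotential k μ z' (starRingEnd ℂ z) w wb) z)
        (starRingEnd ℂ w) = (μ : ℂ) * η / P) ∧
    (deriv (fun wb => deriv (fun w' => sjPotential k μ z (starRingEnd ℂ z) w' wb) w)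
        (starRingEnd ℂ w) = (μ : ℂ) * η * ηb / P + 2 * (k : ℂ) / P ^ 2) := by
  intro P η ηb
  set zb0 : ℂ := starRingEnd ℂ z with hzb0
  set wb0 : ℂ := starRingEnd ℂ w with hwb0
  have hs0 : (1 : ℂ) - w * wb0 ∈ slitPlane := by
    have h1 : Complex.normSq w < 1 := by
      rw [Complex.normSq_eq_norm_sq]
      nlinarith [norm_nonneg w]
    rw [hwb0, Complex.mul_conj, mem_slitPlane_iff]
    left
    simpa using h1
  have hne : (1 : ℂ) - w * wb0 ≠ 0 := slitPlane_ne_zero hs0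
  have hne2 : (2 : ℂ) * (1 - w * wb0) ≠ 0 := mul_ne_zero two_ne_zero hne
  refine ⟨?_, ?_, ?_⟩
  · -- h_{z z̄}
    have hfun : (fun zb => deriv (fun z' => sjPotential k μ z' zb w wb0) z)
        = fun zb => (μ : ℂ) * (2 * zb + 2 * z * wb0) / (2 * (1 - w * wb0)) := by
      funext zb; exact (sj_dz k μ z zb w wb0).deriv
    rw [hfun]
    have hd : HasDerivAt
        (fun zb : ℂ => (μ : ℂ) * (2 * zb + 2 * z * wb0) / (2 * (1 - w * wb0)))
        ((μ : ℂ) / (1 - w * wb0)) zb0 := by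
      have := ((((hasDerivAt_id zb0).const_mul (2 : ℂ)).add_const
        (2 * z * wb0)).const_mul (μ : ℂ)).div_const (2 * (1 - w * wb0))
      refine this.congr_deriv ?_
      field_simp
    rw [hd.deriv]
  · -- h_{z w̄}
    have hfun : (fun wb => deriv (fun z' => sjPotential k μ z' zb0 w wb) z)
        = fun wb => (μ : ℂ) * (2 * zb0 + 2 * z * wb) / (2 * (1 - w * wb)) := by
      funext wb; exact (sj_dz k μ z zb0 w wb).deriv
    rw [hfun]
    have hd : HasDerivAt
        (fun wb : ℂ => (μ : ℂ) * (2 * zb0 + 2 * z * wb) / (2 * (1 - w * wb)))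
        ((μ : ℂ) * (z + zb0 * w) / (1 - w * wb0) ^ 2) wb0 := by
      have hu : HasDerivAt (fun wb : ℂ => (μ : ℂ) * (2 * zb0 + 2 * z * wb))
          ((μ : ℂ) * (2 * z)) wb0 := by
        simpa using (((hasDerivAt_id wb0).const_mul (2 * z)).const_add (2 * zb0)).const_mul (μ : ℂ)
      have hv : HasDerivAt (fun wb : ℂ => 2 * (1 - w * wb)) (2 * (-w)) wb0 := by
        simpa using (((hasDerivAt_id wb0).const_mul w).const_sub 1).const_mul (2 : ℂ)
      have := hu.div hv hne2
      refine this.congr_deriv ?_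
      field_simp
      ring
    rw [hd.deriv]
    show (μ : ℂ) * (z + zb0 * w) / (1 - w * wb0) ^ 2
        = (μ : ℂ) * ((z + zb0 * w) / (1 - w * wb0)) / (1 - w * wb0)
    field_simp
  · -- h_{w w̄}
    have hmemev : ∀ᶠ wb in nhds wb0, 1 - w * wb ∈ slitPlane := by
      have hc : ContinuousAt (fun wb : ℂ => 1 - w * wb) wb0 := by fun_prop
      exact hc.eventually_mem (isOpen_slitPlane.mem_nhds hs0)
    have hfun : (fun wb => deriv (fun w' => sjPotential k μ z zb0 w' wb) w)
        =ᶠ[nhds wb0] fun wb => (μ : ℂ) * (zb0 + z * wb) ^ 2 / (2 * (1 - w * wb) ^ 2)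
            + 2 * (k : ℂ) * wb / (1 - w * wb) := by
      filter_upwards [hmemev] with wb hswb
      exact (sj_dw k μ z zb0 w wb hswb).deriv
    rw [hfun.deriv_eq]
    have hd : HasDerivAt
        (fun wb : ℂ => (μ : ℂ) * (zb0 + z * wb) ^ 2 / (2 * (1 - w * wb) ^ 2)
            + 2 * (k : ℂ) * wb / (1 - w * wb))
        ((μ : ℂ) * (zb0 + z * wb0) * (z + zb0 * w) / (1 - w * wb0) ^ 3
            + 2 * (k : ℂ) / (1 - w * wb0) ^ 2) wb0 := by
      have hden : HasDerivAt (fun wb : ℂ => 1 - w * wb) (-w) wb0 := by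
        simpa using ((hasDerivAt_id wb0).const_mul w).const_sub 1
      have hu : HasDerivAt (fun wb : ℂ => (μ : ℂ) * (zb0 + z * wb) ^ 2)
          ((μ : ℂ) * (2 * (zb0 + z * wb0) * z)) wb0 := by
        have h0 : HasDerivAt (fun wb : ℂ => zb0 + z * wb) z wb0 := by
          simpa using ((hasDerivAt_id wb0).const_mul z).const_add zb0
        have := (h0.pow 2).const_mul (μ : ℂ)
        refine this.congr_deriv ?_
        push_cast; ring
      have hv : HasDerivAt (fun wb : ℂ => 2 * (1 - w * wb) ^ 2)
          (2 * (2 * (1 - w * wb0) * (-w))) wb0 := by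
        have := (hden.pow 2).const_mul (2 : ℂ)
        refine this.congr_deriv ?_
        push_cast; ring
      have hv0 : (2 : ℂ) * (1 - w * wb0) ^ 2 ≠ 0 :=
        mul_ne_zero two_ne_zero (pow_ne_zero _ hne)
      have ht1 := hu.div hv hv0
      have hn : HasDerivAt (fun wb : ℂ => 2 * (k : ℂ) * wb) (2 * (k : ℂ)) wb0 := by
        simpa using (hasDerivAt_id wb0).const_mul (2 * (k : ℂ))
      have ht2 := hn.div hden hne
      have := ht1.add ht2
      refine this.congr_deriv ?_
      field_simp
      ring
    rw [hd.deriv]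
    show (μ : ℂ) * (zb0 + z * wb0) * (z + zb0 * w) / (1 - w * wb0) ^ 3
            + 2 * (k : ℂ) / (1 - w * wb0) ^ 2
        = (μ : ℂ) * ((z + zb0 * w) / (1 - w * wb0)) * ((zb0 + z * wb0) / (1 - w * wb0))
            / (1 - w * wb0) + 2 * (k : ℂ) / (1 - w * wb0) ^ 2
    field_simp
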